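/- Assume every vertex of 𝕋 has degree at least 3. Then 1 and −1 are eigenvalues of the Grover walk U; moreover ker(U − 1) contains ker(d_O) ∩ H^(−), ker(U + 1) contains ker(d_O) ∩ H^(+), and both ker(U − 1) and ker(U + 1) are infinite-dimensional subspaces of ℓ²(A). -/

import Mathlib

/- Setting: 𝕋 = (V,A) an infinite, locally finite tree. Vertices `V`, arcs = darts of a
simple graph `G`; `e.fst` = origin, `e.snd` = terminus, `e.symm` = reversed arc.
ℓ²(A) and ℓ²(V) are the `lp _ 2` spaces. The boundary operators, the shift and the
Grover walk are characterized by their pointwise formulas. -/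

noncomputable section
open scoped ComplexConjugate ComplexInnerProductSpace Classical
open Complex Filter Topology ContinuousLinearMap

namespace GroverAux
variable {V : Type} {G : SimpleGraph V}
variable {V : Type} {G : SimpleGraph V}

lemma symm_fst (e : G.Dart) : e.symm.fst = e.snd := rfl
lemma symm_snd (e : G.Dart) : e.symm.snd = e.fst := rfl


lemma path_length_eq_dist (hG : G.IsTree) {o v : V} (p : G.Walk o v) (hp : p.IsPath) :
    p.length = G.dist o v := by
  obtain ⟨q, hq, hql⟩ := hG.isConnected.exists_path_of_dist o v
  rw [(hG.existsUnique_path o v).unique hp hq, hql]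

/-- dichotomy -/
lemma adj_dist_dichotomy (hG : G.IsTree) (o : V) {u w : V} (h : G.Adj u w) :
    G.dist o w = G.dist o u + 1 ∨ G.dist o u = G.dist o w + 1 := by
  obtain ⟨p, hp, hpl⟩ := hG.isConnected.exists_path_of_dist o u
  by_cases hw : w ∈ p.support
  · right
    have hd : (p.dropUntil w hw).IsPath := hp.dropUntil hw
    have h1 : (SimpleGraph.Walk.cons h.symm SimpleGraph.Walk.nil : G.Walk w u).IsPath := by
      simp [SimpleGraph.Walk.cons_isPath_iff, h.ne']
    have := (hG.existsUnique_path w u).unique hd h1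
    have hlen : (p.takeUntil w hw).length + (p.dropUntil w hw).length = p.length := by
      rw [← SimpleGraph.Walk.length_append, SimpleGraph.Walk.take_spec]
    rw [this] at hlen
    simp only [SimpleGraph.Walk.length_cons, SimpleGraph.Walk.length_nil] at hlen
    have ht : (p.takeUntil w hw).length = G.dist o w :=
      path_length_eq_dist hG _ (hp.takeUntil hw)
    omega
  · left
    have hq : (p.concat h).IsPath := by
      rw [← SimpleGraph.Walk.isPath_reverse_iff]
      rw [SimpleGraph.Walk.reverse_concat]
      exact (hp.reverse).cons (by simpa [SimpleGraph.Walk.support_reverse] using hw)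
    have := path_length_eq_dist hG _ hq
    rw [SimpleGraph.Walk.length_concat, hpl] at this
    omega


lemma parent_path (hG : G.IsTree) (o : V) {v w : V} (h : G.Adj v w)
    (hd : G.dist o w + 1 = G.dist o v) :
    ∃ q : G.Walk o v, q.IsPath ∧ q.reverse.getVert 1 = w := by
  obtain ⟨r, hr, hrl⟩ := hG.isConnected.exists_path_of_dist o w
  have hv : v ∉ r.support := by
    intro hv
    have := path_length_eq_dist hG _ (hr.takeUntil hv)
    have hle := r.length_takeUntil_le hv
    omega
  refine ⟨r.concat h.symm, ?_, ?_⟩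
  · rw [← SimpleGraph.Walk.isPath_reverse_iff, SimpleGraph.Walk.reverse_concat]
    exact (hr.reverse).cons (by simpa [SimpleGraph.Walk.support_reverse] using hv)
  · simp [SimpleGraph.Walk.reverse_concat, SimpleGraph.Walk.getVert_cons_succ]

lemma parent_unique (hG : G.IsTree) (o : V) {v w w' : V} (h : G.Adj v w) (h' : G.Adj v w')
    (hd : G.dist o w + 1 = G.dist o v) (hd' : G.dist o w' + 1 = G.dist o v) : w = w' := by
  obtain ⟨q, hq, hq1⟩ := parent_path hG o h hd
  obtain ⟨q', hq', hq1'⟩ := parent_path hG o h' hd'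
  rw [← hq1, ← hq1', (hG.existsUnique_path o v).unique hq hq']

lemma parent_exists (hG : G.IsTree) (o : V) {v : V} (hv : v ≠ o) :
    ∃ w, G.Adj v w ∧ G.dist o w + 1 = G.dist o v := by
  obtain ⟨p, hp, hpl⟩ := hG.isConnected.exists_path_of_dist o v
  cases hpr : p.reverse with
  | nil =>
      exact absurd rfl hv
  | cons hadj q =>
      refine ⟨_, hadj, ?_⟩
      have hqp : q.IsPath := by
        have := hp.reverse; rw [hpr] at this
        exact (SimpleGraph.Walk.cons_isPath_iff _ _).mp this |>.1
      have := path_length_eq_dist hG q.reverse hqp.reverse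
      have hlen : p.length = q.length + 1 := by
        have := congrArg SimpleGraph.Walk.length hpr
        simpa [Nat.add_comm] using this
      rw [SimpleGraph.Walk.length_reverse] at this
      omega

section par
variable (hG : G.IsTree) (o : V)
include hG

def par (v : V) : V := if h : v = o then v else (parent_exists hG o h).choose

lemma par_adj {v : V} (hv : v ≠ o) :
    G.Adj v (par hG o v) ∧ G.dist o (par hG o v) + 1 = G.dist o v := by
  rw [par, dif_neg hv]; exact (parent_exists hG o hv).choose_spec

lemma par_spec {v w : V} (h : G.Adj v w) (hd : G.dist o w + 1 = G.dist o v) :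
    par hG o v = w := by
  have hv : v ≠ o := by
    intro h'; subst h'
    rw [SimpleGraph.dist_self] at hd; omega
  exact parent_unique hG o (par_adj hG o hv).1 h (par_adj hG o hv).2 hd

def Fwd (e : G.Dart) : Prop := G.dist o e.snd = G.dist o e.fst + 1

lemma fwd_or (e : G.Dart) : Fwd o e ∨ Fwd o e.symm := by
  rcases adj_dist_dichotomy hG o e.adj with h | h
  · left; exact h
  · right; rw [Fwd, symm_fst e, symm_snd e]; exact h

omit hG in
lemma not_fwd_symm {e : G.Dart} (hf : Fwd o e) : ¬ Fwd o e.symm := by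
  rw [Fwd] at hf
  rw [Fwd, symm_fst e, symm_snd e]
  omega

def pdart (v : V) (hv : v ≠ o) : G.Dart := ⟨(v, par hG o v), (par_adj hG o hv).1⟩

def pdartS (v : V) (hv : v ≠ o) : G.Dart := (pdart hG o v hv).symm

lemma pdartS_fst (v : V) (hv : v ≠ o) : (pdartS hG o v hv).fst = par hG o v := rfl
lemma pdartS_snd (v : V) (hv : v ≠ o) : (pdartS hG o v hv).snd = v := rfl

lemma fwd_pdartS (v : V) (hv : v ≠ o) : Fwd o (pdartS hG o v hv) := by
  have := (par_adj hG o hv).2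
  simp only [Fwd, pdartS_fst, pdartS_snd]; omega

lemma fwd_eq_pdartS {e : G.Dart} (hf : Fwd o e) :
    ∃ h : e.snd ≠ o, e = pdartS hG o e.snd h := by
  have hsnd : e.snd ≠ o := by
    intro h
    simp only [Fwd] at hf
    rw [h, SimpleGraph.dist_self] at hf
    omega
  refine ⟨hsnd, ?_⟩
  have : par hG o e.snd = e.fst := par_spec hG o e.adj.symm (by rw [← hf])
  apply SimpleGraph.Dart.ext
  rw [Prod.ext_iff]
  exact ⟨this.symm, rfl⟩


end par
section darts
variable (G) [∀ v : V, Fintype (G.neighborSet v)]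

def dartAtEquiv (v : V) : {e : G.Dart // e.fst = v} ≃ G.neighborSet v where
  toFun e := ⟨e.1.snd, by have := e.1.adj; rwa [e.2] at this⟩
  invFun w := ⟨⟨(v, w.1), w.2⟩, rfl⟩
  left_inv e := by
    apply Subtype.ext
    apply SimpleGraph.Dart.ext
    exact Prod.ext e.2.symm rfl
  right_inv w := rfl

instance dartAtFintype (v : V) : Fintype {e : G.Dart // e.fst = v} :=
  Fintype.ofEquiv _ (dartAtEquiv G v).symm

def dartsAt (v : V) : Finset G.Dart :=
  (Finset.univ : Finset {e : G.Dart // e.fst = v}).image Subtype.val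

variable {G}

lemma mem_dartsAt {v : V} {e : G.Dart} : e ∈ dartsAt G v ↔ e.fst = v := by
  constructor
  · intro h
    obtain ⟨b, _, rfl⟩ := Finset.mem_image.mp h
    exact b.2
  · intro h
    exact Finset.mem_image.mpr ⟨⟨e, h⟩, Finset.mem_univ _, rfl⟩

lemma card_dartsAt (v : V) : (dartsAt G v).card = G.degree v := by
  rw [dartsAt, Finset.card_image_of_injective _ Subtype.val_injective, Finset.card_univ]
  have h1 : Fintype.card {e : G.Dart // e.fst = v} = Fintype.card (G.neighborSet v) :=
    Fintype.card_congr (dartAtEquiv G v)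
  rw [h1, SimpleGraph.card_neighborSet_eq_degree]

variable (G)

def cdarts (o v : V) : Finset G.Dart := (dartsAt G v).filter (fun e => Fwd o e)

def cnum (o v : V) : ℕ := (cdarts G o v).card

variable {G}

lemma mem_cdarts {o v : V} {e : G.Dart} : e ∈ cdarts G o v ↔ e.fst = v ∧ Fwd o e := by
  rw [cdarts, Finset.mem_filter, mem_dartsAt]

lemma tsum_dartsAt (f : G.Dart → ℂ) (u : V) :
    ∑' e : {e : G.Dart // e.fst = u}, f e.1 = ∑ e ∈ dartsAt G u, f e := by
  rw [tsum_fintype]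
  rw [dartsAt, Finset.sum_image (fun _ _ _ _ h => Subtype.val_injective h)]

def symmEquiv (u : V) : {e : G.Dart // e.snd = u} ≃ {e : G.Dart // e.fst = u} where
  toFun e := ⟨e.1.symm, e.2⟩
  invFun e := ⟨e.1.symm, e.2⟩
  left_inv e := Subtype.ext (SimpleGraph.Dart.symm_symm e.1)
  right_inv e := Subtype.ext (SimpleGraph.Dart.symm_symm e.1)

lemma tsum_dartsTo (f : G.Dart → ℂ) (u : V) :
    ∑' e : {e : G.Dart // e.snd = u}, f e.1 = ∑ e ∈ dartsAt G u, f e.symm := by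
  calc ∑' e : {e : G.Dart // e.snd = u}, f e.1
      = ∑' i : {e : G.Dart // e.snd = u},
          (fun e : {e : G.Dart // e.fst = u} => f e.1.symm) (symmEquiv u i) := by
        apply tsum_congr
        intro i
        exact congrArg f (SimpleGraph.Dart.symm_symm i.1).symm
    _ = ∑' e : {e : G.Dart // e.fst = u}, f e.1.symm := (symmEquiv u).tsum_eq (fun e : {e : G.Dart // e.fst = u} => f e.1.symm)
    _ = ∑ e ∈ dartsAt G u, f e.symm := tsum_dartsAt (fun e => f e.symm) u

end darts


section structure1
variable [∀ v : V, Fintype (G.neighborSet v)] (hG : G.IsTree) (o : V)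
include hG

lemma cdarts_root : cdarts G o o = dartsAt G o := by
  rw [cdarts, Finset.filter_true_of_mem]
  intro e he
  have hfst : e.fst = o := mem_dartsAt.mp he
  rcases fwd_or hG o e with h | h
  · exact h
  · exfalso
    rw [Fwd, symm_fst e, symm_snd e, hfst, SimpleGraph.dist_self] at h
    omega

lemma dartsAt_nonroot {v : V} (hv : v ≠ o) :
    dartsAt G v = insert (pdart hG o v hv) (cdarts G o v) := by
  ext e
  rw [mem_dartsAt, Finset.mem_insert, mem_cdarts]
  constructor
  · intro hfst
    rcases fwd_or hG o e with h | h
    · right; exact ⟨hfst, h⟩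
    · left
      subst hfst
      obtain ⟨h1, h2⟩ := fwd_eq_pdartS hG o h
      have h3 := congrArg SimpleGraph.Dart.symm h2
      rw [SimpleGraph.Dart.symm_symm] at h3
      exact h3.trans (SimpleGraph.Dart.symm_symm _)
  · rintro (rfl | ⟨hfst, _⟩)
    · rfl
    · exact hfst

lemma pdart_not_mem_cdarts {v : V} (hv : v ≠ o) : pdart hG o v hv ∉ cdarts G o v := by
  intro h
  exact not_fwd_symm o (fwd_pdartS hG o v hv) (mem_cdarts.mp h).2

lemma sum_dartsAt_nonroot (f : G.Dart → ℂ) {v : V} (hv : v ≠ o) :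
    ∑ e ∈ dartsAt G v, f e = f (pdart hG o v hv) + ∑ e ∈ cdarts G o v, f e := by
  rw [dartsAt_nonroot hG o hv, Finset.sum_insert (pdart_not_mem_cdarts hG o hv)]

lemma cnum_root : cnum G o o = G.degree o := by
  rw [cnum, cdarts_root hG, card_dartsAt]

lemma cnum_nonroot {v : V} (hv : v ≠ o) : cnum G o v + 1 = G.degree v := by
  have h1 := card_dartsAt (G := G) v
  rw [dartsAt_nonroot hG o hv, Finset.card_insert_of_notMem (pdart_not_mem_cdarts hG o hv)]
    at h1
  rw [cnum]; omega

lemma cnum_ge_two (hdeg : ∀ v : V, 3 ≤ G.degree v) (v : V) : 2 ≤ cnum G o v := by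
  by_cases hv : v = o
  · subst hv; rw [cnum_root hG]; have := hdeg v; omega
  · have := cnum_nonroot hG o hv; have := hdeg v; omega

lemma sphere_finite : ∀ n : ℕ, {v : V | G.dist o v = n}.Finite := by
  intro n
  induction n with
  | zero =>
      apply Set.Finite.subset (Set.finite_singleton o)
      intro v hv
      simp only [Set.mem_setOf_eq] at hv
      simp [(hG.isConnected.dist_eq_zero_iff.mp hv).symm]
  | succ n ih =>
      apply Set.Finite.subset (ih.biUnion (fun v _ => (G.neighborSet v).toFinite))
      intro w hw
      simp only [Set.mem_setOf_eq] at hw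
      have hwo : w ≠ o := by
        intro h; rw [h, SimpleGraph.dist_self] at hw; omega
      have hpar := par_adj hG o hwo
      apply Set.mem_biUnion (show par hG o w ∈ {v : V | G.dist o v = n} by
        simp only [Set.mem_setOf_eq]; omega)
      exact hpar.1.symm

omit hG in
lemma dartsFst_finite (s : Set V) (hs : s.Finite) : {e : G.Dart | e.fst ∈ s}.Finite := by
  have hsub : {e : G.Dart | e.fst ∈ s} ⊆ ⋃ v ∈ s, {e : G.Dart | e.fst = v} := by
    intro e he; simpa using he
  exact Set.Finite.subset (hs.biUnion (fun v _ => Set.Finite.ofFinset (dartsAt G v)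
    (fun e => mem_dartsAt))) hsub

lemma level_finite (n : ℕ) : {e : G.Dart | Fwd o e ∧ G.dist o e.fst = n}.Finite := by
  apply Set.Finite.subset (dartsFst_finite {v | G.dist o v = n} (sphere_finite hG o n))
  intro e he
  exact he.2

/-- the finset of forward darts at level `n` -/
def levelF (n : ℕ) : Finset G.Dart := (level_finite hG o n).toFinset

lemma mem_levelF {n : ℕ} {e : G.Dart} :
    e ∈ levelF hG o n ↔ Fwd o e ∧ G.dist o e.fst = n := by
  rw [levelF, Set.Finite.mem_toFinset]; rfl

lemma exists_deep [Infinite V] (N : ℕ) : ∃ v : V, N < G.dist o v := by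
  have hfin : {v : V | G.dist o v ≤ N}.Finite := by
    apply Set.Finite.subset (Set.Finite.biUnion (Set.finite_Iic N)
      (fun k _ => sphere_finite hG o k))
    intro v hv
    simp only [Set.mem_setOf_eq] at hv
    exact Set.mem_biUnion hv rfl
  obtain ⟨v, hv⟩ := hfin.infinite_compl.nonempty
  exact ⟨v, by simpa using hv⟩

end structure1


section valuation
variable [∀ v : V, Fintype (G.neighborSet v)]

def valN (hG : G.IsTree) (o : V) (σ : ℂ) (init : G.Dart → ℂ) : ℕ → G.Dart → ℂ
  | 0, e => init e
  | n+1, e => init e +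
      (if h : e.fst ≠ o then σ * valN hG o σ init n (pdartS hG o e.fst h) else 0) /
        (cnum G o e.fst : ℂ)

variable (hG : G.IsTree) (o : V) (σ : ℂ) (init : G.Dart → ℂ)

def val (e : G.Dart) : ℂ := valN hG o σ init (G.dist o e.fst) e

lemma val_root {e : G.Dart} (h : e.fst = o) : val hG o σ init e = init e := by
  have hd : G.dist o e.fst = 0 := by rw [h, SimpleGraph.dist_self]
  rw [val, hd, valN]

lemma val_rec {e : G.Dart} (h : e.fst ≠ o) :
    val hG o σ init e =
      init e + σ * val hG o σ init (pdartS hG o e.fst h) / (cnum G o e.fst : ℂ) := by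
  have hd : G.dist o e.fst ≠ 0 := by
    intro h0
    exact h (hG.isConnected.dist_eq_zero_iff.mp h0).symm
  obtain ⟨n, hn⟩ : ∃ n, G.dist o e.fst = n + 1 := ⟨G.dist o e.fst - 1, by omega⟩
  have hpd : G.dist o (pdartS hG o e.fst h).fst = n := by
    have := (par_adj hG o h).2
    rw [pdartS_fst]
    omega
  rw [val, hn, valN, dif_pos h, val, hpd]

lemma val_rec' {e : G.Dart} {u : V} (hfst : e.fst = u) (hu : u ≠ o) :
    val hG o σ init e =
      init e + σ * val hG o σ init (pdartS hG o u hu) / (cnum G o u : ℂ) := by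
  subst hfst
  exact val_rec hG o σ init hu

variable {L : ℕ} (hsupp : ∀ e : G.Dart, init e ≠ 0 → G.dist o e.fst = L)
include hsupp

lemma init_zero_of_ne {e : G.Dart} (h : G.dist o e.fst ≠ L) : init e = 0 := by
  by_contra h0
  exact h (hsupp e h0)

lemma val_vanish : ∀ (n : ℕ) (e : G.Dart), G.dist o e.fst = n → n < L →
    val hG o σ init e = 0 := by
  intro n
  induction n with
  | zero =>
      intro e hd hL
      have hfst : e.fst = o := (hG.isConnected.dist_eq_zero_iff.mp hd).symm
      rw [val_root hG o σ init hfst]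
      exact init_zero_of_ne o init hsupp (by omega)
  | succ n ih =>
      intro e hd hL
      have h : e.fst ≠ o := by
        intro h0; rw [h0, SimpleGraph.dist_self] at hd; omega
      rw [val_rec hG o σ init h, init_zero_of_ne o init hsupp (by omega),
        ih (pdartS hG o e.fst h) (by
          have := (par_adj hG o h).2
          rw [pdartS_fst]; omega) (by omega)]
      simp

lemma val_level_L {e : G.Dart} (hd : G.dist o e.fst = L) :
    val hG o σ init e = init e := by
  by_cases h : e.fst = o
  · exact val_root hG o σ init h
  · rw [val_rec hG o σ init h,
      val_vanish hG o σ init hsupp (G.dist o (pdartS hG o e.fst h).fst)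
        (pdartS hG o e.fst h) rfl (by
          have := (par_adj hG o h).2
          rw [pdartS_fst]
          have : G.dist o e.fst ≠ 0 := by
            intro h0; exact h (hG.isConnected.dist_eq_zero_iff.mp h0).symm
          omega)]
    simp

end valuation


section decay
variable [∀ v : V, Fintype (G.neighborSet v)] (hG : G.IsTree) (o : V) (σ : ℂ) (init : G.Dart → ℂ)

def sphereF (n : ℕ) : Finset V := (sphere_finite hG o n).toFinset

lemma mem_sphereF {n : ℕ} {v : V} : v ∈ sphereF hG o n ↔ G.dist o v = n := by
  rw [sphereF, Set.Finite.mem_toFinset]; rfl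

def Asum (n : ℕ) : ℝ := ∑ e ∈ levelF hG o n, ‖val hG o σ init e‖^2

def pval (v : V) : ℝ :=
  if h : v ≠ o then ‖val hG o σ init (pdartS hG o v h)‖^2 else 0

variable {L : ℕ} (hsupp : ∀ e : G.Dart, init e ≠ 0 → G.dist o e.fst = L)
include hsupp

lemma Asum_lt {n : ℕ} (hn : n < L) : Asum hG o σ init n = 0 := by
  apply Finset.sum_eq_zero
  intro e he
  rw [val_vanish hG o σ init hsupp n e ((mem_levelF hG o).mp he).2 hn]
  simp

lemma Asum_L : Asum hG o σ init L = ∑ e ∈ levelF hG o L, ‖init e‖^2 := by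
  apply Finset.sum_congr rfl
  intro e he
  rw [val_level_L hG o σ init hsupp ((mem_levelF hG o).mp he).2]

lemma Asum_succ (hσ : ‖σ‖ = 1) (hc2 : ∀ v : V, 2 ≤ cnum G o v) {n : ℕ} (hn : L ≤ n) :
    Asum hG o σ init (n+1) ≤ Asum hG o σ init n / 2 := by
  have hne : ∀ v ∈ sphereF hG o (n+1), v ≠ o := by
    intro v hv h0
    rw [mem_sphereF hG o, h0, SimpleGraph.dist_self] at hv
    omega
  have hstep : ∀ e ∈ levelF hG o (n+1),
      ‖val hG o σ init e‖^2 = pval hG o σ init e.fst / ((cnum G o e.fst : ℝ))^2 := by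
    intro e he
    obtain ⟨hf, hd⟩ := (mem_levelF hG o).mp he
    have h : e.fst ≠ o := by
      intro h0; rw [h0, SimpleGraph.dist_self] at hd; omega
    have hval : val hG o σ init e =
        σ * val hG o σ init (pdartS hG o e.fst h) / (cnum G o e.fst : ℂ) := by
      rw [val_rec hG o σ init h, init_zero_of_ne o init hsupp (by omega), zero_add]
    rw [hval, pval, dif_pos h]
    rw [norm_div, norm_mul, hσ, one_mul, Complex.norm_natCast, div_pow]
  have hmaps : ∀ e ∈ levelF hG o (n+1), e.fst ∈ sphereF hG o (n+1) := by
    intro e he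
    rw [mem_sphereF hG o]
    exact ((mem_levelF hG o).mp he).2
  have h1 : Asum hG o σ init (n+1) =
      ∑ v ∈ sphereF hG o (n+1), ∑ e ∈ (levelF hG o (n+1)).filter (fun e => e.fst = v),
        pval hG o σ init e.fst / ((cnum G o e.fst : ℝ))^2 := by
    rw [Asum, Finset.sum_congr rfl hstep]
    exact (Finset.sum_fiberwise_of_maps_to hmaps _).symm
  have hfilter : ∀ v ∈ sphereF hG o (n+1),
      (levelF hG o (n+1)).filter (fun e => e.fst = v) = cdarts G o v := by
    intro v hv
    rw [mem_sphereF hG o] at hv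
    ext e
    rw [Finset.mem_filter, mem_levelF hG o, mem_cdarts]
    constructor
    · rintro ⟨⟨h1, _⟩, h2⟩; exact ⟨h2, h1⟩
    · rintro ⟨h1, h2⟩; exact ⟨⟨h2, by rw [h1, hv]⟩, h1⟩
  have h2 : Asum hG o σ init (n+1) ≤ ∑ v ∈ sphereF hG o (n+1), pval hG o σ init v / 2 := by
    rw [h1]
    apply Finset.sum_le_sum
    intro v hv
    rw [hfilter v hv]
    have hinner : ∀ e ∈ cdarts G o v,
        pval hG o σ init e.fst / ((cnum G o e.fst : ℝ))^2
          = pval hG o σ init v / ((cnum G o v : ℝ))^2 := by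
      intro e he
      rw [(mem_cdarts.mp he).1]
    rw [Finset.sum_congr rfl hinner, Finset.sum_const, ← cnum, nsmul_eq_mul]
    have hc := hc2 v
    have hcR : (2:ℝ) ≤ (cnum G o v : ℝ) := by exact_mod_cast hc
    have hp0 : 0 ≤ pval hG o σ init v := by
      rw [pval]; split <;> positivity
    have heq : (cnum G o v : ℝ) * (pval hG o σ init v / ((cnum G o v : ℝ))^2)
        = pval hG o σ init v / (cnum G o v : ℝ) := by
      field_simp
    rw [heq]
    exact div_le_div_of_nonneg_left hp0 (by norm_num) hcR
  have h3 : ∑ v ∈ sphereF hG o (n+1), pval hG o σ init v ≤ Asum hG o σ init n := by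
    have hinj : ∀ a ∈ (sphereF hG o (n+1)).attach, ∀ b ∈ (sphereF hG o (n+1)).attach,
        pdartS hG o a.1 (hne a.1 a.2) = pdartS hG o b.1 (hne b.1 b.2) → a = b := by
      intro a _ b _ hab
      have h := congrArg (fun e : G.Dart => e.snd) hab
      rw [pdartS_snd, pdartS_snd] at h
      exact Subtype.ext h
    have hsubset : (sphereF hG o (n+1)).attach.image
        (fun v : {x // x ∈ sphereF hG o (n+1)} => pdartS hG o v.1 (hne v.1 v.2))
        ⊆ levelF hG o n := by
      intro e he
      obtain ⟨v, _, rfl⟩ := Finset.mem_image.mp he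
      rw [mem_levelF hG o]
      refine ⟨fwd_pdartS hG o v.1 (hne v.1 v.2), ?_⟩
      have h4 := (par_adj hG o (hne v.1 v.2)).2
      have hv := (mem_sphereF hG o).mp v.2
      rw [pdartS_fst]
      omega
    calc ∑ v ∈ sphereF hG o (n+1), pval hG o σ init v
        = ∑ v ∈ (sphereF hG o (n+1)).attach, pval hG o σ init v.1 :=
          (Finset.sum_attach _ _).symm
      _ = ∑ v ∈ (sphereF hG o (n+1)).attach,
            ‖val hG o σ init (pdartS hG o v.1 (hne v.1 v.2))‖^2 := by
          apply Finset.sum_congr rfl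
          intro v _
          rw [pval, dif_pos (hne v.1 v.2)]
      _ = ∑ e ∈ (sphereF hG o (n+1)).attach.image
            (fun v : {x // x ∈ sphereF hG o (n+1)} => pdartS hG o v.1 (hne v.1 v.2)),
            ‖val hG o σ init e‖^2 :=
            (Finset.sum_image (f := fun e => ‖val hG o σ init e‖^2) hinj).symm
      _ ≤ Asum hG o σ init n := by
          apply Finset.sum_le_sum_of_subset_of_nonneg hsubset
          intros; positivity
  calc Asum hG o σ init (n+1) ≤ ∑ v ∈ sphereF hG o (n+1), pval hG o σ init v / 2 := h2
    _ = (∑ v ∈ sphereF hG o (n+1), pval hG o σ init v) / 2 := by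
        rw [Finset.sum_div]
    _ ≤ Asum hG o σ init n / 2 := by linarith [h3]

lemma Asum_le (hσ : ‖σ‖ = 1) (hc2 : ∀ v : V, 2 ≤ cnum G o v) (j : ℕ) :
    Asum hG o σ init (L + j) ≤ (∑ e ∈ levelF hG o L, ‖init e‖^2) * (1/2)^j := by
  induction j with
  | zero =>
      rw [Nat.add_zero, Asum_L hG o σ init hsupp, pow_zero, mul_one]
  | succ j ih =>
      have h1 : L + (j+1) = (L + j) + 1 := rfl
      rw [h1]
      calc Asum hG o σ init ((L+j)+1) ≤ Asum hG o σ init (L+j) / 2 :=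
            Asum_succ hG o σ init hsupp hσ hc2 (by omega)
        _ ≤ (∑ e ∈ levelF hG o L, ‖init e‖^2) * (1/2)^j / 2 := by linarith [ih]
        _ = (∑ e ∈ levelF hG o L, ‖init e‖^2) * (1/2)^(j+1) := by ring

lemma sum_forward_le {K : ℝ} (hK : ∑ e ∈ levelF hG o L, ‖init e‖^2 ≤ K) (hK0 : 0 ≤ K)
    (hσ : ‖σ‖ = 1) (hc2 : ∀ v : V, 2 ≤ cnum G o v)
    (t : Finset G.Dart) (ht : ∀ e ∈ t, Fwd o e) :
    ∑ e ∈ t, ‖val hG o σ init e‖^2 ≤ 2 * K := by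
  have hAle : ∀ j : ℕ, Asum hG o σ init (L + j) ≤ K * (1/2)^j := by
    intro j
    calc Asum hG o σ init (L + j)
        ≤ (∑ e ∈ levelF hG o L, ‖init e‖^2) * (1/2)^j := Asum_le hG o σ init hsupp hσ hc2 j
      _ ≤ K * (1/2)^j := by
          apply mul_le_mul_of_nonneg_right hK
          positivity
  set N := t.sup (fun e => G.dist o e.fst) with hN
  have hsub : t ⊆ (Finset.range (N+1)).biUnion (levelF hG o) := by
    intro e he
    apply Finset.mem_biUnion.mpr
    refine ⟨G.dist o e.fst, ?_, (mem_levelF hG o).mpr ⟨ht e he, rfl⟩⟩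
    rw [Finset.mem_range]
    have h5 : G.dist o e.fst ≤ N := Finset.le_sup (f := fun e => G.dist o e.fst) he
    omega
  have hle1 : ∑ e ∈ t, ‖val hG o σ init e‖^2
      ≤ ∑ e ∈ (Finset.range (N+1)).biUnion (levelF hG o), ‖val hG o σ init e‖^2 := by
    apply Finset.sum_le_sum_of_subset_of_nonneg hsub
    intros; positivity
  have hdisj : ∀ n₁ ∈ (Finset.range (N+1) : Finset ℕ), ∀ n₂ ∈ (Finset.range (N+1) : Finset ℕ),
      n₁ ≠ n₂ → Disjoint (levelF hG o n₁) (levelF hG o n₂) := by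
    intro n1 _ n2 _ hnen
    rw [Finset.disjoint_left]
    intro e he1 he2
    rw [mem_levelF hG o] at he1 he2
    exact hnen (he1.2 ▸ he2.2 ▸ rfl)
  rw [Finset.sum_biUnion hdisj] at hle1
  have hsum : ∑ n ∈ Finset.range (N+1), Asum hG o σ init n ≤ 2 * K := by
    by_cases hLN : L ≤ N + 1
    · have hsplit : ∑ n ∈ Finset.Ico 0 L, Asum hG o σ init n
          + ∑ n ∈ Finset.Ico L (N+1), Asum hG o σ init n
          = ∑ n ∈ Finset.Ico 0 (N+1), Asum hG o σ init n :=
        Finset.sum_Ico_consecutive _ (by omega) (by omega)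
      have hzero : ∑ n ∈ Finset.Ico 0 L, Asum hG o σ init n = 0 := by
        apply Finset.sum_eq_zero
        intro n hn
        rw [Finset.mem_Ico] at hn
        exact Asum_lt hG o σ init hsupp hn.2
      have hIco : ∑ n ∈ Finset.Ico L (N+1), Asum hG o σ init n
          = ∑ j ∈ Finset.range (N+1-L), Asum hG o σ init (L + j) :=
        Finset.sum_Ico_eq_sum_range (fun n => Asum hG o σ init n) L (N+1)
      have hgeom : ∑ j ∈ Finset.range (N+1-L), Asum hG o σ init (L + j) ≤ 2 * K := by
        calc ∑ j ∈ Finset.range (N+1-L), Asum hG o σ init (L + j)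
            ≤ ∑ j ∈ Finset.range (N+1-L), K * (1/2)^j :=
              Finset.sum_le_sum (fun j _ => hAle j)
          _ = K * ∑ j ∈ Finset.range (N+1-L), (1/(2:ℝ))^j := by
              rw [Finset.mul_sum]
          _ ≤ K * 2 := mul_le_mul_of_nonneg_left (sum_geometric_two_le _) hK0
          _ = 2 * K := by ring
      calc ∑ n ∈ Finset.range (N+1), Asum hG o σ init n
          = ∑ n ∈ Finset.Ico 0 (N+1), Asum hG o σ init n := by
            rw [Finset.range_eq_Ico]
        _ = ∑ n ∈ Finset.Ico 0 L, Asum hG o σ init n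
            + ∑ n ∈ Finset.Ico L (N+1), Asum hG o σ init n := hsplit.symm
        _ ≤ 2 * K := by rw [hzero, zero_add, hIco]; exact hgeom
    · apply le_trans _ (by linarith : (0:ℝ) ≤ 2 * K)
      apply le_of_eq
      apply Finset.sum_eq_zero
      intro n hn
      rw [Finset.mem_range] at hn
      exact Asum_lt hG o σ init hsupp (by omega)
  exact le_trans hle1 hsum

end decay



section flow
variable [∀ v : V, Fintype (G.neighborSet v)] (hG : G.IsTree) (o : V) (ε : ℂ) (init : G.Dart → ℂ)

def flow (e : G.Dart) : ℂ :=
  if Fwd o e then val hG o (-ε) init e else ε * val hG o (-ε) init e.symm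

lemma flow_fwd {e : G.Dart} (h : Fwd o e) : flow hG o ε init e = val hG o (-ε) init e :=
  if_pos h

lemma flow_bwd {e : G.Dart} (h : ¬ Fwd o e) :
    flow hG o ε init e = ε * val hG o (-ε) init e.symm := if_neg h

lemma flow_symm (hε : ε = 1 ∨ ε = -1) (e : G.Dart) :
    flow hG o ε init e.symm = ε * flow hG o ε init e := by
  by_cases h : Fwd o e
  · rw [flow_bwd hG o ε init (not_fwd_symm o h), SimpleGraph.Dart.symm_symm,
      flow_fwd hG o ε init h]
  · have h2 : Fwd o e.symm := (fwd_or hG o e).resolve_left h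
    rw [flow_fwd hG o ε init h2, flow_bwd hG o ε init h]
    rcases hε with rfl | rfl <;> ring

lemma flow_div (hc2 : ∀ v : V, 2 ≤ cnum G o v)
    (hsuppF : ∀ e : G.Dart, init e ≠ 0 → Fwd o e)
    (hdivinit : ∀ v : V, ∑ e ∈ cdarts G o v, init e = 0) (u : V) :
    ∑ e ∈ dartsAt G u, flow hG o ε init e = 0 := by
  by_cases hu : u = o
  · subst hu
    rw [← cdarts_root hG u]
    have hcong : ∀ e ∈ cdarts G u u, flow hG u ε init e = init e := by
      intro e he
      obtain ⟨hfst, hf⟩ := mem_cdarts.mp he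
      rw [flow_fwd hG u ε init hf, val_root hG u (-ε) init hfst]
    rw [Finset.sum_congr rfl hcong, hdivinit u]
  · rw [sum_dartsAt_nonroot hG o _ hu]
    have hpd : flow hG o ε init (pdart hG o u hu)
        = ε * val hG o (-ε) init (pdartS hG o u hu) := by
      have hnf : ¬ Fwd o (pdart hG o u hu) := by
        have h6 := not_fwd_symm o (fwd_pdartS hG o u hu)
        rwa [pdartS, SimpleGraph.Dart.symm_symm] at h6
      rw [flow_bwd hG o ε init hnf]
      rfl
    have hcd : ∀ e ∈ cdarts G o u, flow hG o ε init e
        = init e + (-ε) * val hG o (-ε) init (pdartS hG o u hu) / (cnum G o u : ℂ) := by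
      intro e he
      obtain ⟨hfst, hf⟩ := mem_cdarts.mp he
      rw [flow_fwd hG o ε init hf, val_rec' hG o (-ε) init hfst hu]
    rw [hpd, Finset.sum_congr rfl hcd, Finset.sum_add_distrib, hdivinit u, zero_add,
      Finset.sum_const, ← cnum, nsmul_eq_mul]
    have hc0 : (cnum G o u : ℂ) ≠ 0 := by
      have h7 := hc2 u
      exact_mod_cast (Nat.cast_ne_zero (R := ℂ)).mpr (by omega)
    field_simp
    ring

lemma flow_memlp {L : ℕ} (hsupp : ∀ e : G.Dart, init e ≠ 0 → G.dist o e.fst = L)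
    {K : ℝ} (hK : ∑ e ∈ levelF hG o L, ‖init e‖^2 ≤ K) (hK0 : 0 ≤ K)
    (hε : ε = 1 ∨ ε = -1) (hc2 : ∀ v : V, 2 ≤ cnum G o v) :
    Memℓp (flow hG o ε init) 2 := by
  have hσ : ‖(-ε : ℂ)‖ = 1 := by
    rcases hε with rfl | rfl <;> simp
  apply memℓp_gen' (C := 4 * K)
  intro s
  have htr : ((2 : ENNReal).toReal) = (2:ℝ) := by simp
  have hpt : ∀ e : G.Dart, ‖flow hG o ε init e‖ ^ ((2 : ENNReal).toReal)
      = ‖flow hG o ε init e‖ ^ (2:ℕ) := by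
    intro e
    rw [htr]
    rw [show ((2:ℝ) = ((2:ℕ):ℝ)) by norm_num, Real.rpow_natCast]
  rw [Finset.sum_congr rfl (fun e _ => hpt e)]
  have hsplit : s = s.filter (fun e => Fwd o e) ∪ s.filter (fun e => ¬ Fwd o e) :=
    (Finset.filter_union_filter_not_eq _ s).symm
  have hdisj : Disjoint (s.filter (fun e => Fwd o e)) (s.filter (fun e => ¬ Fwd o e)) :=
    Finset.disjoint_filter_filter_not s s _
  rw [hsplit, Finset.sum_union hdisj]
  have hfwd : ∑ e ∈ s.filter (fun e => Fwd o e), ‖flow hG o ε init e‖^2 ≤ 2 * K := by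
    have hcong : ∀ e ∈ s.filter (fun e => Fwd o e),
        ‖flow hG o ε init e‖^2 = ‖val hG o (-ε) init e‖^2 := by
      intro e he
      rw [flow_fwd hG o ε init (Finset.mem_filter.mp he).2]
    rw [Finset.sum_congr rfl hcong]
    exact sum_forward_le hG o (-ε) init hsupp hK hK0 hσ hc2 _
      (fun e he => (Finset.mem_filter.mp he).2)
  have hbwd : ∑ e ∈ s.filter (fun e => ¬ Fwd o e), ‖flow hG o ε init e‖^2 ≤ 2 * K := by
    have hcong : ∀ e ∈ s.filter (fun e => ¬ Fwd o e),
        ‖flow hG o ε init e‖^2 = ‖val hG o (-ε) init e.symm‖^2 := by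
      intro e he
      rw [flow_bwd hG o ε init (Finset.mem_filter.mp he).2, norm_mul]
      rcases hε with rfl | rfl <;> simp
    rw [Finset.sum_congr rfl hcong]
    have hinj : ∀ a ∈ s.filter (fun e => ¬ Fwd o e), ∀ b ∈ s.filter (fun e => ¬ Fwd o e),
        a.symm = b.symm → a = b := by
      intro a _ b _ hab
      have := congrArg SimpleGraph.Dart.symm hab
      rwa [SimpleGraph.Dart.symm_symm, SimpleGraph.Dart.symm_symm] at this
    rw [show (∑ e ∈ s.filter (fun e => ¬ Fwd o e), ‖val hG o (-ε) init e.symm‖^2)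
        = ∑ e ∈ (s.filter (fun e => ¬ Fwd o e)).image (fun e => e.symm),
            ‖val hG o (-ε) init e‖^2 from
      (Finset.sum_image (f := fun e => ‖val hG o (-ε) init e‖^2) hinj).symm]
    apply sum_forward_le hG o (-ε) init hsupp hK hK0 hσ hc2
    intro e he
    obtain ⟨a, ha, rfl⟩ := Finset.mem_image.mp he
    exact (fwd_or hG o a).resolve_left (Finset.mem_filter.mp ha).2
  linarith

end flow


section initOf
variable [∀ v : V, Fintype (G.neighborSet v)]

def initOf (a b e : G.Dart) : ℂ := if e = a then 1 else if e = b then -1 else 0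

variable (hG : G.IsTree) (o : V) {a b : G.Dart} {u : V}

lemma initOf_supp {e : G.Dart} (h : initOf a b e ≠ 0) : e = a ∨ e = b := by
  by_contra hcon
  push_neg at hcon
  rw [initOf, if_neg hcon.1, if_neg hcon.2] at h
  exact h rfl

lemma initOf_hsupp (ha : a ∈ cdarts G o u) (hb : b ∈ cdarts G o u) :
    ∀ e : G.Dart, initOf a b e ≠ 0 → G.dist o e.fst = G.dist o u := by
  intro e h
  rcases initOf_supp h with rfl | rfl
  · rw [(mem_cdarts.mp ha).1]
  · rw [(mem_cdarts.mp hb).1]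

lemma initOf_fwd (ha : a ∈ cdarts G o u) (hb : b ∈ cdarts G o u) :
    ∀ e : G.Dart, initOf a b e ≠ 0 → Fwd o e := by
  intro e h
  rcases initOf_supp h with rfl | rfl
  · exact (mem_cdarts.mp ha).2
  · exact (mem_cdarts.mp hb).2

lemma initOf_div (ha : a ∈ cdarts G o u) (hb : b ∈ cdarts G o u) (hne : a ≠ b) :
    ∀ v : V, ∑ e ∈ cdarts G o v, initOf a b e = 0 := by
  intro v
  have hsplit : ∀ e : G.Dart,
      initOf a b e = (if e = a then (1:ℂ) else 0) + (if e = b then (-1:ℂ) else 0) := by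
    intro e
    rw [initOf]
    split_ifs with h1 h2 <;> first | (exfalso; exact hne (h1 ▸ h2 ▸ rfl)) | ring
  rw [Finset.sum_congr rfl (fun e _ => hsplit e), Finset.sum_add_distrib,
    Finset.sum_ite_eq' (cdarts G o v) a (fun _ => (1:ℂ)),
    Finset.sum_ite_eq' (cdarts G o v) b (fun _ => (-1:ℂ))]
  by_cases hv : v = u
  · subst hv
    rw [if_pos ha, if_pos hb]
    ring
  · rw [if_neg (fun hmem => hv ((mem_cdarts.mp hmem).1.symm.trans (mem_cdarts.mp ha).1)),
      if_neg (fun hmem => hv ((mem_cdarts.mp hmem).1.symm.trans (mem_cdarts.mp hb).1))]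
    ring

lemma initOf_K (hne : a ≠ b) (s : Finset G.Dart) :
    ∑ e ∈ s, ‖initOf a b e‖^2 ≤ 2 := by
  have hsplit : ∀ e : G.Dart,
      ‖initOf a b e‖^2 = (if e = a then (1:ℝ) else 0) + (if e = b then (1:ℝ) else 0) := by
    intro e
    rw [initOf]
    split_ifs with h1 h2 <;>
      first | (exfalso; exact hne (h1 ▸ h2 ▸ rfl)) | simp
  rw [Finset.sum_congr rfl (fun e _ => hsplit e), Finset.sum_add_distrib,
    Finset.sum_ite_eq' s a (fun _ => (1:ℝ)), Finset.sum_ite_eq' s b (fun _ => (1:ℝ))]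
  split_ifs <;> norm_num

lemma exists_two_cdarts (hG : G.IsTree) (o : V) (hdeg : ∀ v : V, 3 ≤ G.degree v) (u : V) :
    ∃ a ∈ cdarts G o u, ∃ b ∈ cdarts G o u, a ≠ b := by
  have h := cnum_ge_two hG o hdeg u
  rw [cnum] at h
  exact Finset.one_lt_card.mp (by omega)

end initOf

end GroverAux

namespace GroverStmt

/-- ℓ²(V) -/
abbrev lV (V : Type) : Type := lp (fun _ : V => ℂ) 2

variable {V : Type} (G : SimpleGraph V)

/-- ℓ²(A) where A is the set of symmetric arcs (darts) of `G`. -/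
abbrev lA : Type := lp (fun _ : G.Dart => ℂ) 2

section deg
variable [∀ v : V, Fintype (G.neighborSet v)]

/-- `(d_T ψ)(u) = Σ_{e : t(e)=u} ψ(e)/√(deg u)` -/
def IsBoundaryT (dT : lA G →L[ℂ] lV V) : Prop :=
  ∀ (ψ : lA G) (u : V),
    dT ψ u = ∑' e : {e : G.Dart // e.snd = u}, ψ e.1 / (Real.sqrt (G.degree u) : ℂ)

/-- `(d_O ψ)(u) = Σ_{e : o(e)=u} ψ(e)/√(deg u)` -/
def IsBoundaryO (dO : lA G →L[ℂ] lV V) : Prop :=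
  ∀ (ψ : lA G) (u : V),
    dO ψ u = ∑' e : {e : G.Dart // e.fst = u}, ψ e.1 / (Real.sqrt (G.degree u) : ℂ)

end deg

/-- `(Sψ)(e) = ψ(ē)` -/
def IsShift (S : lA G →L[ℂ] lA G) : Prop :=
  ∀ (ψ : lA G) (e : G.Dart), S ψ e = ψ e.symm

/-- the Grover walk `U = S (2 d_T* d_T − 1)` -/
def grover (S : lA G →L[ℂ] lA G) (dT : lA G →L[ℂ] lV V) : lA G →L[ℂ] lA G :=
  S ∘L ((2 : ℂ) • ((adjoint dT) ∘L dT) - 1)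

variable (o : V)

/-- `v` is a descendant of `u` (w.r.t. the root `o`). -/
def desc (u v : V) : Prop := G.dist o v = G.dist o u + G.dist u v

/-- `e` is an arc pointing away from `u` inside the subtree of descendants of `u`. -/
def awayIn (u : V) (e : G.Dart) : Prop :=
  desc G o u e.fst ∧ desc G o u e.snd ∧ G.dist u e.fst < G.dist u e.snd

section flows
variable [∀ v : V, Fintype (G.neighborSet v)]

/-- `m(u)`: the number of children of `u`. -/
def m (u : V) : ℕ := if u = o then G.degree u else G.degree u - 1

/-- `En u : Fin (m u) → Dart` is an enumeration `e_0^(u), …, e_{m(u)-1}^(u)` of the arcs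
from `u` to its children. -/
def IsChildEnum (En : ∀ u : V, Fin (m G o u) → G.Dart) : Prop :=
  ∀ u : V,
    Function.Injective (En u) ∧
    (∀ k, (En u k).fst = u ∧ G.dist o (En u k).snd = G.dist o u + 1) ∧
    (∀ e : G.Dart, e.fst = u → G.dist o e.snd = G.dist o u + 1 → ∃ k, En u k = e)

/-- the defining properties of the flow function `φ_{u,j}^(ε) : A → ℂ`. -/
def IsFlow (En : ∀ u : V, Fin (m G o u) → G.Dart)
    (u : V) (j : ℕ) (ε : ℂ) (φ : G.Dart → ℂ) : Prop :=
  (∀ k : Fin (m G o u),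
      φ (En u k) =
        Complex.exp (2 * Real.pi * Complex.I * j / (m G o u)) ^ (k : ℕ) / (m G o u)) ∧
  (∀ e : G.Dart, awayIn G o u e → e.fst ≠ u →
     ∀ f : G.Dart, awayIn G o u f → f.snd = e.fst →
       φ e = ε * φ f / (m G o e.fst)) ∧
  (∀ e : G.Dart, awayIn G o u e → φ e.symm = -ε * φ e) ∧
  (∀ e : G.Dart, ¬(desc G o u e.fst ∧ desc G o u e.snd) → φ e = 0)

end flows




section OperatorAux
variable {G} [∀ v : V, Fintype (G.neighborSet v)]
open GroverAux

/-- evaluation at a dart as a linear map on `ℓ²(A)` -/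
def evalA (e : G.Dart) : lA G →ₗ[ℂ] ℂ where
  toFun f := f e
  map_add' f g := by
    show (f + g) e = f e + g e
    rw [lp.coeFn_add]
    rfl
  map_smul' c f := by
    show (c • f) e = (RingHom.id ℂ) c • f e
    rw [lp.coeFn_smul]
    rfl

lemma dO_pointwise {dO : lA G →L[ℂ] lV V} (hdO : IsBoundaryO G dO) (ψ : lA G)
    (hO : dO ψ = 0) (u : V) :
    ∑ e ∈ dartsAt G u, ψ e / (Real.sqrt (G.degree u) : ℂ) = 0 := by
  have h1 : dO ψ u = ∑ e ∈ dartsAt G u, ψ e / (Real.sqrt (G.degree u) : ℂ) :=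
    (hdO ψ u).trans (tsum_dartsAt (fun e => ψ e / (Real.sqrt (G.degree u) : ℂ)) u)
  have h2 : dO ψ u = 0 := by rw [hO]; simp
  exact h1.symm.trans h2

lemma dT_zero {dT : lA G →L[ℂ] lV V} {dO : lA G →L[ℂ] lV V}
    (hdT : IsBoundaryT G dT) (hdO : IsBoundaryO G dO) (ψ : lA G) (hO : dO ψ = 0)
    (ε : ℂ) (hsym : ∀ e : G.Dart, ψ e.symm = ε * ψ e) : dT ψ = 0 := by
  apply lp.ext
  funext u
  have h1 : dT ψ u = ∑ e ∈ dartsAt G u, ψ e.symm / (Real.sqrt (G.degree u) : ℂ) :=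
    (hdT ψ u).trans (tsum_dartsTo (fun e => ψ e / (Real.sqrt (G.degree u) : ℂ)) u)
  have h2 : ∑ e ∈ dartsAt G u, ψ e.symm / (Real.sqrt (G.degree u) : ℂ)
      = ε * ∑ e ∈ dartsAt G u, ψ e / (Real.sqrt (G.degree u) : ℂ) := by
    rw [Finset.mul_sum]
    apply Finset.sum_congr rfl
    intro e _
    rw [hsym e]
    ring
  have h3 : (dT ψ) u = 0 := by
    rw [h1, h2, dO_pointwise hdO ψ hO u, mul_zero]
  rw [h3]
  simp

lemma grover_eigen {dT dO : lA G →L[ℂ] lV V} {S : lA G →L[ℂ] lA G}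
    (hdT : IsBoundaryT G dT) (hdO : IsBoundaryO G dO) (hS : IsShift G S) (ψ : lA G)
    (hO : dO ψ = 0) (ε : ℂ) (hsym : ∀ e : G.Dart, ψ e.symm = ε * ψ e) :
    grover G S dT ψ = (-ε) • ψ := by
  have hz : dT ψ = 0 := dT_zero hdT hdO ψ hO ε hsym
  have h1 : ((2:ℂ) • ((adjoint dT) ∘L dT) - 1) ψ = -ψ := by
    rw [ContinuousLinearMap.sub_apply, ContinuousLinearMap.smul_apply,
      ContinuousLinearMap.comp_apply, hz, map_zero, smul_zero,
      ContinuousLinearMap.one_apply, zero_sub]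
  have h2 : S ψ = ε • ψ := by
    apply lp.ext
    funext e
    rw [hS ψ e, hsym e, lp.coeFn_smul]
    rfl
  rw [grover, ContinuousLinearMap.comp_apply, h1, map_neg, h2, neg_smul]

lemma mem_ker_one {T : lA G →L[ℂ] lA G} {ψ : lA G} (h : T ψ = ψ) :
    ψ ∈ LinearMap.ker ((T : lA G →L[ℂ] lA G).toLinearMap - 1) := by
  rw [LinearMap.mem_ker, LinearMap.sub_apply, Module.End.one_apply]
  rw [ContinuousLinearMap.coe_coe, h, sub_self]

lemma mem_ker_neg_one {T : lA G →L[ℂ] lA G} {ψ : lA G} (h : T ψ = -ψ) :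
    ψ ∈ LinearMap.ker ((T : lA G →L[ℂ] lA G).toLinearMap + 1) := by
  rw [LinearMap.mem_ker, LinearMap.add_apply, Module.End.one_apply]
  rw [ContinuousLinearMap.coe_coe, h, neg_add_cancel]

lemma linearIndependent_of_eval {ψ : ℕ → lA G} (a : ℕ → G.Dart)
    (h1 : ∀ n, ψ n (a n) = 1) (h0 : ∀ m n, n < m → ψ m (a n) = 0) :
    LinearIndependent ℂ ψ := by
  rw [linearIndependent_iff']
  intro s
  induction s using Finset.strongInduction with
  | _ s ih =>
    intro g hsum i hi
    have hne : s.Nonempty := ⟨i, hi⟩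
    set n := s.min' hne with hn
    have heval : ∑ j ∈ s, g j * (ψ j) (a n) = 0 := by
      have h := congrArg (evalA (a n)) hsum
      rw [map_sum, map_zero] at h
      rw [← h]
      apply Finset.sum_congr rfl
      intro j _
      rw [map_smul]
      rfl
    have hgn : g n = 0 := by
      have hsingle : ∑ j ∈ s, g j * (ψ j) (a n) = g n * (ψ n) (a n) := by
        apply Finset.sum_eq_single n
        · intro j hj hjn
          have hlt : n < j := lt_of_le_of_ne (s.min'_le j hj) (Ne.symm hjn)
          rw [h0 j n hlt, mul_zero]
        · intro hns
          exact absurd (s.min'_mem hne) hns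
      rw [hsingle, h1 n, mul_one] at heval
      exact heval
    have hsum' : ∑ j ∈ s.erase n, g j • ψ j = 0 := by
      have h := Finset.add_sum_erase s (fun j => g j • ψ j) (s.min'_mem hne)
      rw [hsum] at h
      simpa [hgn, ← hn] using h
    have hrec := ih (s.erase n) (Finset.erase_ssubset (s.min'_mem hne)) g hsum'
    by_cases hin : i = n
    · rw [hin]; exact hgn
    · exact hrec i (Finset.mem_erase.mpr ⟨hin, hi⟩)

end OperatorAux

/-- if every degree is at least 3, then `1` and `−1` are eigenvalues of
the Grover walk `U`; `ker(U − 1) ⊇ ker(d_O) ∩ H^(−)`, `ker(U + 1) ⊇ ker(d_O) ∩ H^(+)`,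
and both `ker(U − 1)` and `ker(U + 1)` are infinite dimensional. -/
theorem statement8 {V : Type} (G : SimpleGraph V) [∀ v : V, Fintype (G.neighborSet v)]
    (hG : G.IsTree) [Infinite V]
    (hdeg : ∀ v : V, 3 ≤ G.degree v)
    (dT dO : lA G →L[ℂ] lV V) (S : lA G →L[ℂ] lA G)
    (hdT : IsBoundaryT G dT) (hdO : IsBoundaryO G dO) (hS : IsShift G S) :
    (∃ ψ : lA G, ψ ≠ 0 ∧ grover G S dT ψ = ψ) ∧
    (∃ ψ : lA G, ψ ≠ 0 ∧ grover G S dT ψ = -ψ) ∧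
    (∀ ψ : lA G, dO ψ = 0 → (∀ e : G.Dart, ψ e.symm = -ψ e) →
      ψ ∈ LinearMap.ker ((grover G S dT).toLinearMap - 1)) ∧
    (∀ ψ : lA G, dO ψ = 0 → (∀ e : G.Dart, ψ e.symm = ψ e) →
      ψ ∈ LinearMap.ker ((grover G S dT).toLinearMap + 1)) ∧
    ¬ FiniteDimensional ℂ (LinearMap.ker ((grover G S dT).toLinearMap - 1)) ∧
    ¬ FiniteDimensional ℂ (LinearMap.ker ((grover G S dT).toLinearMap + 1)) := by
  classical
  have hNE : Nonempty V := inferInstance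
  set o : V := Classical.arbitrary V with ho
  have hc2 : ∀ v : V, 2 ≤ GroverAux.cnum G o v := GroverAux.cnum_ge_two hG o hdeg
  -- generic builder: given a target vertex u, build an eigenfunction-candidate
  -- ψ supported in the subtree below `u`
  have build : ∀ (ε : ℂ), ε = 1 ∨ ε = -1 → ∀ u : V,
      ∃ ψ : lA G, dO ψ = 0 ∧ (∀ e : G.Dart, ψ e.symm = ε * ψ e) ∧
        (∃ ad : G.Dart, ad.fst = u ∧ GroverAux.Fwd o ad ∧ ψ ad = 1) ∧
        (∀ e : G.Dart, GroverAux.Fwd o e → G.dist o e.fst < G.dist o u → ψ e = 0) := by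
    intro ε hε u
    obtain ⟨a, ha, b, hb, hab⟩ := GroverAux.exists_two_cdarts hG o hdeg u
    set init : G.Dart → ℂ := GroverAux.initOf a b with hinit
    have hsupp : ∀ e : G.Dart, init e ≠ 0 → G.dist o e.fst = G.dist o u :=
      GroverAux.initOf_hsupp o ha hb
    have hmem : Memℓp (GroverAux.flow hG o ε init) 2 :=
      GroverAux.flow_memlp hG o ε init hsupp (GroverAux.initOf_K hab _) (by norm_num) hε hc2
    set ψ : lA G := ⟨GroverAux.flow hG o ε init, hmem⟩ with hψ
    have hcoe : ∀ e : G.Dart, ψ e = GroverAux.flow hG o ε init e := fun _ => rfl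
    refine ⟨ψ, ?_, ?_, ?_, ?_⟩
    · apply lp.ext
      funext w
      have h1 : dO ψ w = ∑ e ∈ GroverAux.dartsAt G w, ψ e / (Real.sqrt (G.degree w) : ℂ) :=
        (hdO ψ w).trans (GroverAux.tsum_dartsAt (fun e => ψ e / (Real.sqrt (G.degree w) : ℂ)) w)
      have h2 : ∑ e ∈ GroverAux.dartsAt G w, ψ e / (Real.sqrt (G.degree w) : ℂ) = 0 := by
        rw [← Finset.sum_div]
        have h3 : ∑ e ∈ GroverAux.dartsAt G w, ψ e
            = ∑ e ∈ GroverAux.dartsAt G w, GroverAux.flow hG o ε init e :=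
          Finset.sum_congr rfl (fun e _ => hcoe e)
        rw [h3, GroverAux.flow_div hG o ε init hc2 (GroverAux.initOf_fwd o ha hb)
          (GroverAux.initOf_div o ha hb hab), zero_div]
      have h4 : (dO ψ) w = 0 := h1.trans h2
      rw [h4]
      simp
    · intro e
      rw [hcoe, hcoe]
      exact GroverAux.flow_symm hG o ε init hε e
    · refine ⟨a, (GroverAux.mem_cdarts.mp ha).1, (GroverAux.mem_cdarts.mp ha).2, ?_⟩
      rw [hcoe]
      rw [GroverAux.flow_fwd hG o ε init (GroverAux.mem_cdarts.mp ha).2]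
      have h5 : G.dist o a.fst = G.dist o u := by rw [(GroverAux.mem_cdarts.mp ha).1]
      rw [GroverAux.val_level_L hG o (-ε) init hsupp h5]
      rw [hinit, GroverAux.initOf, if_pos rfl]
    · intro e hfwd hlt
      rw [hcoe, GroverAux.flow_fwd hG o ε init hfwd]
      exact GroverAux.val_vanish hG o (-ε) init hsupp _ e rfl hlt
  -- membership lemmas (parts 3 and 4)
  have part3 : ∀ ψ : lA G, dO ψ = 0 → (∀ e : G.Dart, ψ e.symm = -ψ e) →
      ψ ∈ LinearMap.ker ((grover G S dT).toLinearMap - 1) := by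
    intro ψ hO hsym
    have h := grover_eigen hdT hdO hS ψ hO (-1) (fun e => by rw [hsym e]; ring)
    rw [neg_neg, one_smul] at h
    exact mem_ker_one h
  have part4 : ∀ ψ : lA G, dO ψ = 0 → (∀ e : G.Dart, ψ e.symm = ψ e) →
      ψ ∈ LinearMap.ker ((grover G S dT).toLinearMap + 1) := by
    intro ψ hO hsym
    have h := grover_eigen hdT hdO hS ψ hO 1 (fun e => by rw [hsym e]; ring)
    rw [neg_smul, one_smul] at h
    exact mem_ker_neg_one h
  -- the increasing sequence of vertices
  obtain ⟨uu, huu⟩ : ∃ uu : ℕ → V, StrictMono (fun n => G.dist o (uu n)) := by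
    have hstep : ∀ N : ℕ, ∃ v : V, N < G.dist o v := GroverAux.exists_deep hG o
    set f : ℕ → V := fun N => (hstep N).choose with hf
    have hfs : ∀ N, N < G.dist o (f N) := fun N => (hstep N).choose_spec
    set uu : ℕ → V := fun n => Nat.rec (f 0) (fun _ v => f (G.dist o v)) n with huu
    refine ⟨uu, strictMono_nat_of_lt_succ ?_⟩
    intro n
    exact hfs (G.dist o (uu n))
  -- eigenfunction families
  have family : ∀ (ε : ℂ), ε = 1 ∨ ε = -1 →
      ∃ ψ : ℕ → lA G, (∀ n, dO (ψ n) = 0) ∧ (∀ n e, (ψ n) e.symm = ε * (ψ n) e) ∧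
        LinearIndependent ℂ ψ := by
    intro ε hε
    choose ψ hψO hψsym hψa hψv using fun n => build ε hε (uu n)
    choose ad had hfwd hone using hψa
    refine ⟨ψ, hψO, hψsym, linearIndependent_of_eval ad hone ?_⟩
    intro m n hnm
    apply hψv m (ad n) (hfwd n)
    rw [had n]
    exact huu hnm
  -- nontrivial single eigenfunctions
  have single : ∀ (ε : ℂ), ε = 1 ∨ ε = -1 →
      ∃ ψ : lA G, ψ ≠ 0 ∧ dO ψ = 0 ∧ (∀ e : G.Dart, ψ e.symm = ε * ψ e) := by
    intro ε hε
    obtain ⟨ψ, hO, hsym, ⟨ad, _, _, hone⟩, _⟩ := build ε hε o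
    refine ⟨ψ, ?_, hO, hsym⟩
    intro h
    rw [h] at hone
    simp at hone
  obtain ⟨ψm, hψm0, hψmO, hψmsym⟩ := single (-1) (Or.inr rfl)
  obtain ⟨ψp, hψp0, hψpO, hψpsym⟩ := single 1 (Or.inl rfl)
  have hψm_eig : grover G S dT ψm = ψm := by
    have h := grover_eigen hdT hdO hS ψm hψmO (-1) hψmsym
    rwa [neg_neg, one_smul] at h
  have hψp_eig : grover G S dT ψp = -ψp := by
    have h := grover_eigen hdT hdO hS ψp hψpO 1 hψpsym
    rwa [neg_smul, one_smul] at h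
  refine ⟨⟨ψm, hψm0, hψm_eig⟩, ⟨ψp, hψp0, hψp_eig⟩, part3, part4, ?_, ?_⟩
  · intro hFD
    obtain ⟨ψ, hO, hsym, hli⟩ := family (-1) (Or.inr rfl)
    have hmem : ∀ n, ψ n ∈ LinearMap.ker ((grover G S dT).toLinearMap - 1) := by
      intro n
      exact part3 (ψ n) (hO n) (fun e => by rw [hsym n e]; ring)
    set F : ℕ → LinearMap.ker ((grover G S dT).toLinearMap - 1) :=
      fun n => ⟨ψ n, hmem n⟩ with hF
    have hliF : LinearIndependent ℂ F := by
      apply LinearIndependent.of_comp (LinearMap.ker ((grover G S dT).toLinearMap - 1)).subtype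
      exact hli
    have := hliF.lt_aleph0_of_finiteDimensional
    simp [Cardinal.mk_nat] at this
  · intro hFD
    obtain ⟨ψ, hO, hsym, hli⟩ := family 1 (Or.inl rfl)
    have hmem : ∀ n, ψ n ∈ LinearMap.ker ((grover G S dT).toLinearMap + 1) := by
      intro n
      exact part4 (ψ n) (hO n) (fun e => by rw [hsym n e]; ring)
    set F : ℕ → LinearMap.ker ((grover G S dT).toLinearMap + 1) :=
      fun n => ⟨ψ n, hmem n⟩ with hF
    have hliF : LinearIndependent ℂ F := by
      apply LinearIndependent.of_comp (LinearMap.ker ((grover G S dT).toLinearMap + 1)).subtype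
      exact hli
    have := hliF.lt_aleph0_of_finiteDimensional
    simp [Cardinal.mk_nat] at this


end GroverStmt
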